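/- Let U ⊆ ℂ be open and let ξ, μ : ℂ → ℂ be holomorphic on U such that w(z) := conj(ξ(z)) − μ(z) ≠ 0 for every z ∈ U, and suppose that ξ′(z) · μ′(z) = 1/4 for every z ∈ U. Then for every z ∈ U one has |Δ(log |w|)(z)| ≤ 1 / |w(z)|². -/

import Mathlib

open Complex ContinuousLinearMap


/-- Partial derivative in the direction of `1` (the `x`-direction) of `u : ℂ → ℝ`. -/
noncomputable def pdx (u : ℂ → ℝ) (z : ℂ) : ℝ := fderiv ℝ u z 1

/-- Partial derivative in the direction of `I` (the `y`-direction) of `u : ℂ → ℝ`. -/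
noncomputable def pdy (u : ℂ → ℝ) (z : ℂ) : ℝ := fderiv ℝ u z Complex.I

/-- The flat Laplacian `Δu = ∂²u/∂x² + ∂²u/∂y²` of `u : ℂ → ℝ`. -/
noncomputable def lap (u : ℂ → ℝ) (z : ℂ) : ℝ := pdx (pdx u) z + pdy (pdy u) z



open Complex ContinuousLinearMap

noncomputable def cmR (c : ℂ) : ℂ →L[ℝ] ℂ := ContinuousLinearMap.mul ℝ ℂ c

@[simp] lemma cmR_apply (c h : ℂ) : cmR c h = c * h := rfl

noncomputable def cjR : ℂ →L[ℝ] ℂ := Complex.conjCLE.toContinuousLinearMap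

@[simp] lemma cjR_apply (h : ℂ) : cjR h = (starRingEnd ℂ) h := rfl

lemma HasDerivAt.hasFDerivAt_real {f : ℂ → ℂ} {f' z : ℂ} (hf : HasDerivAt f f' z) :
    HasFDerivAt f (cmR f') z := by
  have h := hf.hasFDerivAt.restrictScalars ℝ
  refine h.congr_fderiv ?_
  ext h'
  simp [mul_comm]

lemma hasFDerivAt_conj_comp {f : ℂ → ℂ} {f' z : ℂ} (hf : HasDerivAt f f' z) :
    HasFDerivAt (fun x => (starRingEnd ℂ) (f x)) (cjR.comp (cmR f')) z := by
  have h := cjR.hasFDerivAt.comp z hf.hasFDerivAt_real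
  exact h.congr_of_eventuallyEq (Filter.Eventually.of_forall fun x => by
    simp [cjR, Function.comp])

lemma hasFDerivAt_log_abs {f : ℂ → ℂ} {T : ℂ →L[ℝ] ℂ} {z : ℂ}
    (hf : HasFDerivAt f T z) (h0 : f z ≠ 0) :
    HasFDerivAt (fun x => Real.log (‖f x‖))
      ((Complex.normSq (f z))⁻¹ •
        (Complex.reCLM.comp ((cmR ((starRingEnd ℂ) (f z))).comp T))) z := by
  have hre : HasFDerivAt (fun x => (f x).re) (Complex.reCLM.comp T) z :=
    Complex.reCLM.hasFDerivAt.comp z hf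
  have him : HasFDerivAt (fun x => (f x).im) (Complex.imCLM.comp T) z :=
    Complex.imCLM.hasFDerivAt.comp z hf
  have hsq : HasFDerivAt (fun x => Complex.normSq (f x))
      (((f z).re • (Complex.reCLM.comp T) + (f z).re • (Complex.reCLM.comp T)) +
       ((f z).im • (Complex.imCLM.comp T) + (f z).im • (Complex.imCLM.comp T))) z := by
    have h := (hre.mul hre).add (him.mul him)
    exact h.congr_of_eventuallyEq (Filter.Eventually.of_forall fun x => by
      simp [Complex.normSq_apply])
  have hns : Complex.normSq (f z) ≠ 0 := by
    simpa [Complex.normSq_eq_zero] using h0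
  have hlog := (Real.hasDerivAt_log hns).comp_hasFDerivAt z hsq
  have h2 := hlog.const_mul (2⁻¹ : ℝ)
  have hfun : (fun x => Real.log (‖f x‖))
      = fun x => (2⁻¹ : ℝ) * Real.log (Complex.normSq (f x)) := by
    funext x
    rw [Complex.norm_def, Real.log_sqrt (Complex.normSq_nonneg _)]
    ring
  rw [hfun]
  refine h2.congr_fderiv ?_
  ext h
  simp [Complex.mul_re, smul_smul]
  ring

lemma re_helper (a v : ℂ) :
    (Complex.normSq v)⁻¹ * ((starRingEnd ℂ) v * a).re = (a * v⁻¹).re := by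
  rcases eq_or_ne v 0 with rfl | hv
  · simp
  · rw [Complex.inv_def]
    simp [Complex.mul_re, Complex.normSq_apply, Complex.conj_re, Complex.conj_im,
      Complex.ofReal_inv]
    field_simp

/-- If `ξ, μ` are holomorphic on an open set `U ⊆ ℂ`, `w = conj ∘ ξ − μ` never vanishes on `U`,
and `ξ' μ' = 1/4` on `U`, then `|Δ (log |w|)| ≤ 1 / |w|²` on `U`. -/
theorem abs_laplacian_log_abs_w_le
    (U : Set ℂ) (hU : IsOpen U) (ξ μ : ℂ → ℂ)
    (hξ : DifferentiableOn ℂ ξ U) (hμ : DifferentiableOn ℂ μ U)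
    (w : ℂ → ℂ) (hw : ∀ z, w z = (starRingEnd ℂ) (ξ z) - μ z)
    (hw0 : ∀ z ∈ U, w z ≠ 0)
    (hWeier : ∀ z ∈ U, deriv ξ z * deriv μ z = 1 / 4) :
    ∀ z ∈ U,
      |lap (fun z => Real.log (‖w z‖)) z| ≤ 1 / ‖w z‖ ^ 2 := by
  intro z₀ hz₀
  have hξa : AnalyticOnNhd ℂ ξ U := hξ.analyticOnNhd hU
  have hμa : AnalyticOnNhd ℂ μ U := hμ.analyticOnNhd hU
  have hξ'a : AnalyticOnNhd ℂ (deriv ξ) U := hξa.deriv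
  have hμ'a : AnalyticOnNhd ℂ (deriv μ) U := hμa.deriv
  have hwd : ∀ z ∈ U, HasFDerivAt w
      (cjR.comp (cmR (deriv ξ z)) - cmR (deriv μ z)) z := by
    intro z hz
    have h1 : HasDerivAt ξ (deriv ξ z) z := ((hξa z hz).differentiableAt).hasDerivAt
    have h2 : HasDerivAt μ (deriv μ z) z := ((hμa z hz).differentiableAt).hasDerivAt
    have h := (hasFDerivAt_conj_comp h1).sub h2.hasFDerivAt_real
    exact h.congr_of_eventuallyEq (Filter.Eventually.of_forall fun x => hw x)
  have hud : ∀ z ∈ U, HasFDerivAt (fun z => Real.log (‖w z‖))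
      ((Complex.normSq (w z))⁻¹ • (Complex.reCLM.comp ((cmR ((starRingEnd ℂ) (w z))).comp
        (cjR.comp (cmR (deriv ξ z)) - cmR (deriv μ z))))) z :=
    fun z hz => hasFDerivAt_log_abs (hwd z hz) (hw0 z hz)
  set P : ℂ → ℝ := fun z => (((starRingEnd ℂ) (deriv ξ z) - deriv μ z) * (w z)⁻¹).re with hPdef
  set Q : ℂ → ℝ := fun z =>
    ((-Complex.I * ((starRingEnd ℂ) (deriv ξ z) + deriv μ z)) * (w z)⁻¹).re with hQdef
  have hpdx : ∀ z ∈ U, pdx (fun z => Real.log (‖w z‖)) z = P z := by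
    intro z hz
    rw [pdx, (hud z hz).fderiv]
    simp [hPdef, Complex.mul_re, Complex.inv_re, Complex.inv_im]
    ring
  have hpdy : ∀ z ∈ U, pdy (fun z => Real.log (‖w z‖)) z = Q z := by
    intro z hz
    rw [pdy, (hud z hz).fderiv]
    simp [hQdef, Complex.mul_re, Complex.inv_re, Complex.inv_im]
    ring
  -- second derivatives at z₀
  have h1 : HasDerivAt (deriv ξ) (deriv (deriv ξ) z₀) z₀ :=
    ((hξ'a z₀ hz₀).differentiableAt).hasDerivAt
  have h2 : HasDerivAt (deriv μ) (deriv (deriv μ) z₀) z₀ :=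
    ((hμ'a z₀ hz₀).differentiableAt).hasDerivAt
  have hA : HasFDerivAt (fun z => (starRingEnd ℂ) (deriv ξ z) - deriv μ z)
      (cjR.comp (cmR (deriv (deriv ξ) z₀)) - cmR (deriv (deriv μ) z₀)) z₀ :=
    (hasFDerivAt_conj_comp h1).sub h2.hasFDerivAt_real
  have hC : HasFDerivAt (fun z => -Complex.I * ((starRingEnd ℂ) (deriv ξ z) + deriv μ z))
      ((-Complex.I) • (cjR.comp (cmR (deriv (deriv ξ) z₀)) + cmR (deriv (deriv μ) z₀))) z₀ :=
    ((hasFDerivAt_conj_comp h1).add h2.hasFDerivAt_real).const_mul (-Complex.I)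
  have hwinv : HasFDerivAt (fun z => (w z)⁻¹)
      ((-(ContinuousLinearMap.mulLeftRight ℝ ℂ (w z₀)⁻¹ (w z₀)⁻¹)).comp
        (cjR.comp (cmR (deriv ξ z₀)) - cmR (deriv μ z₀))) z₀ :=
    (hasFDerivAt_inv' (hw0 z₀ hz₀)).comp z₀ (hwd z₀ hz₀)
  have hPd := Complex.reCLM.hasFDerivAt.comp z₀ (hA.mul hwinv)
  have hQd := Complex.reCLM.hasFDerivAt.comp z₀ (hC.mul hwinv)
  have hPd' : HasFDerivAt P _ z₀ := hPd.congr_of_eventuallyEq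
    (Filter.Eventually.of_forall fun x => by simp [hPdef, Function.comp])
  have hQd' : HasFDerivAt Q _ z₀ := hQd.congr_of_eventuallyEq
    (Filter.Eventually.of_forall fun x => by simp [hQdef, Function.comp])
  have hUe : U ∈ nhds z₀ := hU.mem_nhds hz₀
  have e1 : fderiv ℝ (pdx (fun z => Real.log (‖w z‖))) z₀ = fderiv ℝ P z₀ :=
    Filter.EventuallyEq.fderiv_eq (Filter.eventuallyEq_of_mem hUe fun z hz => hpdx z hz)
  have e2 : fderiv ℝ (pdy (fun z => Real.log (‖w z‖))) z₀ = fderiv ℝ Q z₀ :=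
    Filter.EventuallyEq.fderiv_eq (Filter.eventuallyEq_of_mem hUe fun z hz => hpdy z hz)
  have hw2 : w z₀ ≠ 0 := hw0 z₀ hz₀
  have hlap : lap (fun z => Real.log (‖w z‖)) z₀
      = (4 * (starRingEnd ℂ) (deriv ξ z₀) * deriv μ z₀ / (w z₀) ^ 2).re := by
    rw [lap, pdx, pdy, e1, e2, hPd'.fderiv, hQd'.fderiv]
    simp only [ContinuousLinearMap.comp_apply, ContinuousLinearMap.add_apply,
      ContinuousLinearMap.coe_smul', Pi.smul_apply, ContinuousLinearMap.sub_apply,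
      ContinuousLinearMap.neg_apply, ContinuousLinearMap.mulLeftRight_apply,
      cmR_apply, cjR_apply, Complex.reCLM_apply, smul_eq_mul, mul_one, one_mul]
    rw [← Complex.add_re]
    congr 1
    simp only [map_mul, Complex.conj_I]
    field_simp
    ring_nf
    simp only [Complex.I_sq]
    ring
  rw [hlap]
  have hnum : ‖4 * (starRingEnd ℂ) (deriv ξ z₀) * deriv μ z₀‖ = 1 := by
    rw [norm_mul, norm_mul, Complex.norm_conj, mul_assoc, ← norm_mul, hWeier z₀ hz₀]
    norm_num
  calc |(4 * (starRingEnd ℂ) (deriv ξ z₀) * deriv μ z₀ / (w z₀) ^ 2).re|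
      ≤ ‖4 * (starRingEnd ℂ) (deriv ξ z₀) * deriv μ z₀ / (w z₀) ^ 2‖ :=
        Complex.abs_re_le_norm _
    _ = 1 / ‖w z₀‖ ^ 2 := by rw [norm_div, norm_pow, hnum]
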